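/- Let h ∈ L²(P) be such that hX is integrable and such that E[hX | 𝒢]·V⁻¹·X lies in L²(P) and E[hX | 𝒢]·V⁻¹·X² is integrable (for instance, E[hX | 𝒢]·V⁻¹ essentially bounded). Define h_p := h − E[hX | 𝒢]·V⁻¹·X − E[h | 𝒢]. Then h_p ∈ Λ and h − h_p is orthogonal in L²(P) to every element of Λ; that is, h_p is the orthogonal projection of h onto Λ. -/

import Mathlib

open MeasureTheory

variable {Ω : Type*}

lemma integrable_mul_of_memL2 {m0 : MeasurableSpace Ω} {μ : Measure Ω}
    {f g : Ω → ℝ} (hf : MemLp f 2 μ) (hg : MemLp g 2 μ) :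
    Integrable (fun ω => f ω * g ω) μ := by
  have h := hg.smul hf (r := 1) (hpqr := ⟨by rw [ENNReal.inv_two_add_inv_two]; simp⟩)
  rw [memLp_one_iff_integrable] at h
  exact h

lemma memL2_condexp {m m0 : MeasurableSpace Ω} {μ : Measure Ω} [IsProbabilityMeasure μ]
    (hm : m ≤ m0) {f : Ω → ℝ} (hf : MemLp f 2 μ) : MemLp (μ[f|m]) 2 μ := by
  set g := ((condExpL2 ℝ ℝ hm (hf.toLp f) : lpMeas ℝ ℝ m 2 μ) : Lp ℝ 2 μ) with hg
  have heq : (g : Ω → ℝ) =ᵐ[μ] μ[f|m] := by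
    refine ae_eq_condExp_of_forall_setIntegral_eq hm (hf.integrable one_le_two)
      (fun s hs hμs => ((Lp.memLp g).integrable one_le_two).integrableOn)
      (fun s hs hμs => ?_) ?_
    · exact (integral_condExpL2_eq hm (hf.toLp f) hs hμs.ne).trans
        (setIntegral_congr_ae (hm s hs) ((hf.coeFn_toLp).mono fun ω hω _ => hω))
    · exact aestronglyMeasurable_condExpL2 hm (hf.toLp f)
  exact (Lp.memLp g).ae_eq heq


/-- The subspace `Λ = {h ∈ L²(P) : E[h | 𝒢] = 0 a.s. and E[hX | 𝒢] = 0 a.s.}`. -/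
def LambdaSet {m0 : MeasurableSpace Ω} (μ : Measure Ω) (m : MeasurableSpace Ω)
    (X : Ω → ℝ) : Set (Ω → ℝ) :=
  {g | MemLp g 2 μ ∧ μ[g|m] =ᵐ[μ] 0 ∧ μ[(fun ω => g ω * X ω)|m] =ᵐ[μ] 0}

/-- The candidate projection `h_p := h − E[hX | 𝒢]·V⁻¹·X − E[h | 𝒢]`,
where `V = E[X² | 𝒢]`. -/
noncomputable def projCandidate {m0 : MeasurableSpace Ω} (μ : Measure Ω)
    (m : MeasurableSpace Ω) (X h : Ω → ℝ) : Ω → ℝ :=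
  fun ω => h ω - (μ[(fun ω' => h ω' * X ω')|m]) ω * ((μ[(fun ω' => (X ω')^2)|m]) ω)⁻¹ * X ω
    - (μ[h|m]) ω

/-- projection onto `Λ`.
Let `(Ω, ℱ, P)` be a probability space, `𝒢 ⊆ ℱ` a sub-σ-algebra, `X ∈ L²(P)` with
`E[X | 𝒢] = 0` a.s. and `V := E[X² | 𝒢] > 0` a.s.  Let `h ∈ L²(P)` with `hX` integrable,
`E[hX | 𝒢]·V⁻¹·X ∈ L²(P)` and `E[hX | 𝒢]·V⁻¹·X²` integrable.  Then
`h_p := h − E[hX | 𝒢]·V⁻¹·X − E[h | 𝒢]` lies in `Λ` and `h − h_p` is orthogonal in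
`L²(P)` to every element of `Λ`; i.e. `h_p` is the orthogonal projection of `h` onto `Λ`. -/
theorem projection_onto_Lambda
    {m0 : MeasurableSpace Ω} (μ : Measure Ω) [IsProbabilityMeasure μ]
    (m : MeasurableSpace Ω) (hm : m ≤ m0)
    (X : Ω → ℝ) (hX2 : MemLp X 2 μ)
    (hXcond : μ[X|m] =ᵐ[μ] 0)
    (hVpos : ∀ᵐ ω ∂μ, 0 < (μ[(fun ω' => (X ω')^2)|m]) ω)
    (h : Ω → ℝ) (hh2 : MemLp h 2 μ)
    (hhX : Integrable (fun ω => h ω * X ω) μ)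
    (hL2 : MemLp (fun ω =>
      (μ[(fun ω' => h ω' * X ω')|m]) ω * ((μ[(fun ω' => (X ω')^2)|m]) ω)⁻¹ * X ω) 2 μ)
    (hInt : Integrable (fun ω =>
      (μ[(fun ω' => h ω' * X ω')|m]) ω * ((μ[(fun ω' => (X ω')^2)|m]) ω)⁻¹ * (X ω)^2) μ) :
    projCandidate μ m X h ∈ LambdaSet μ m X ∧
      ∀ g ∈ LambdaSet μ m X,
        ∫ ω, (h ω - projCandidate μ m X h ω) * g ω ∂μ = 0 := by
  haveI : SigmaFinite (μ.trim hm) := by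
    have : IsFiniteMeasure (μ.trim hm) := isFiniteMeasure_trim hm
    infer_instance
  set c : Ω → ℝ := μ[(fun ω' => h ω' * X ω')|m] with hc_def
  set V : Ω → ℝ := μ[(fun ω' => (X ω')^2)|m] with hV_def
  set ch : Ω → ℝ := μ[h|m] with hch_def
  set b : Ω → ℝ := fun ω => c ω * (V ω)⁻¹ with hb_def
  have hb_meas : StronglyMeasurable[m] b := by
    have hc : StronglyMeasurable[m] c := stronglyMeasurable_condExp
    have hV : StronglyMeasurable[m] V := stronglyMeasurable_condExp
    exact (hc.measurable.mul hV.measurable.inv).stronglyMeasurable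
  have hch_meas : StronglyMeasurable[m] ch := stronglyMeasurable_condExp
  have hch2 : MemLp ch 2 μ := memL2_condexp hm hh2
  have hX_int : Integrable X μ := hX2.integrable one_le_two
  have hbX_int : Integrable (fun ω => b ω * X ω) μ := hL2.integrable one_le_two
  have hchX_int : Integrable (fun ω => ch ω * X ω) μ := integrable_mul_of_memL2 hch2 hX2
  have hch_int : Integrable ch μ := hch2.integrable one_le_two
  -- condexp of b * X is 0
  have hbX_cond : μ[(fun ω => b ω * X ω)|m] =ᵐ[μ] 0 := by
    have h1 : μ[(fun ω => b ω * X ω)|m] =ᵐ[μ] fun ω => b ω * (μ[X|m]) ω :=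
      condExp_mul_of_stronglyMeasurable_left hb_meas hbX_int hX_int
    filter_upwards [h1, hXcond] with ω h1 h2
    simp only [Pi.zero_apply] at h2 ⊢
    rw [h1, h2, mul_zero]
  -- condexp of ch * X is 0
  have hchX_cond : μ[(fun ω => ch ω * X ω)|m] =ᵐ[μ] 0 := by
    have h1 : μ[(fun ω => ch ω * X ω)|m] =ᵐ[μ] fun ω => ch ω * (μ[X|m]) ω :=
      condExp_mul_of_stronglyMeasurable_left hch_meas hchX_int hX_int
    filter_upwards [h1, hXcond] with ω h1 h2
    simp only [Pi.zero_apply] at h2 ⊢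
    rw [h1, h2, mul_zero]
  -- condexp of b * X^2 is c
  have hbX2_cond : μ[(fun ω => b ω * (X ω)^2)|m] =ᵐ[μ] c := by
    have hX2_int : Integrable (fun ω => (X ω)^2) μ := hX2.integrable_sq
    have h1 : μ[(fun ω => b ω * (X ω)^2)|m] =ᵐ[μ] fun ω => b ω * V ω :=
      condExp_mul_of_stronglyMeasurable_left hb_meas hInt hX2_int
    filter_upwards [h1, hVpos] with ω hω hVω
    rw [hω]
    have hVne : V ω ≠ 0 := ne_of_gt hVω
    simp only [hb_def]
    field_simp
  have hch_cond : μ[ch|m] =ᵐ[μ] ch := condExp_condExp_of_le le_rfl hm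
  have hp2 : MemLp (projCandidate μ m X h) 2 μ := (hh2.sub hL2).sub hch2
  constructor
  · refine ⟨hp2, ?_, ?_⟩
    · -- E[h_p | m] = 0
      have hs1 : Integrable (fun ω => h ω - b ω * X ω) μ :=
        (hh2.integrable one_le_two).sub hbX_int
      have e0 : μ[projCandidate μ m X h|m] =ᵐ[μ]
          fun ω => (μ[(fun ω' => h ω' - b ω' * X ω')|m]) ω - (μ[ch|m]) ω :=
        condExp_sub hs1 hch_int m
      have e1 : μ[(fun ω' => h ω' - b ω' * X ω')|m] =ᵐ[μ]
          fun ω => (μ[h|m]) ω - (μ[(fun ω' => b ω' * X ω')|m]) ω :=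
        condExp_sub (hh2.integrable one_le_two) hbX_int m
      filter_upwards [e0, e1, hbX_cond, hch_cond] with ω h0 h1 h2 h3
      simp only [Pi.zero_apply] at h2 ⊢
      rw [h0, h1, h2, h3]
      show ch ω - 0 - ch ω = 0
      ring
    · -- E[h_p X | m] = 0
      have heq : (fun ω => projCandidate μ m X h ω * X ω)
          = fun ω => (h ω * X ω - b ω * (X ω)^2) - ch ω * X ω := by
        funext ω
        simp only [projCandidate, hb_def, hc_def, hV_def, hch_def]
        ring
      rw [heq]
      have hs1 : Integrable (fun ω => h ω * X ω - b ω * (X ω)^2) μ := hhX.sub hInt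
      have e0 : μ[(fun ω => (h ω * X ω - b ω * (X ω)^2) - ch ω * X ω)|m] =ᵐ[μ]
          fun ω => (μ[(fun ω' => h ω' * X ω' - b ω' * (X ω')^2)|m]) ω
            - (μ[(fun ω' => ch ω' * X ω')|m]) ω :=
        condExp_sub hs1 hchX_int m
      have e1 : μ[(fun ω' => h ω' * X ω' - b ω' * (X ω')^2)|m] =ᵐ[μ]
          fun ω => (μ[(fun ω' => h ω' * X ω')|m]) ω - (μ[(fun ω' => b ω' * (X ω')^2)|m]) ω :=
        condExp_sub hhX hInt m
      filter_upwards [e0, e1, hbX2_cond, hchX_cond] with ω h0 h1 h2 h3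
      simp only [Pi.zero_apply] at h3 ⊢
      rw [h0, h1, h2, h3]
      show c ω - c ω - 0 = 0
      ring
  · -- orthogonality
    rintro g ⟨g2, gcond, gXcond⟩
    have hXg_int : Integrable (fun ω => X ω * g ω) μ := integrable_mul_of_memL2 hX2 g2
    have hXg_cond : μ[(fun ω => X ω * g ω)|m] =ᵐ[μ] 0 := by
      rw [show (fun ω => X ω * g ω) = fun ω => g ω * X ω from funext fun ω => mul_comm _ _]
      exact gXcond
    have hbg_int : Integrable (fun ω => b ω * (X ω * g ω)) μ :=
      (integrable_mul_of_memL2 hL2 g2).congr (Filter.Eventually.of_forall fun ω => by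
        simp only [hb_def]; ring)
    have hchg_int : Integrable (fun ω => ch ω * g ω) μ := integrable_mul_of_memL2 hch2 g2
    have key1 : ∫ ω, b ω * (X ω * g ω) ∂μ = 0 := by
      rw [← integral_condExp hm (f := fun ω => b ω * (X ω * g ω))]
      have e1 : μ[(fun ω => b ω * (X ω * g ω))|m] =ᵐ[μ]
          fun ω => b ω * (μ[(fun ω' => X ω' * g ω')|m]) ω :=
        condExp_mul_of_stronglyMeasurable_left hb_meas hbg_int hXg_int
      have e2 : μ[(fun ω => b ω * (X ω * g ω))|m] =ᵐ[μ] 0 := by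
        filter_upwards [e1, hXg_cond] with ω h1 h2
        simp only [Pi.zero_apply] at h2 ⊢
        rw [h1, h2, mul_zero]
      rw [integral_congr_ae e2]
      simp
    have key2 : ∫ ω, ch ω * g ω ∂μ = 0 := by
      rw [← integral_condExp hm (f := fun ω => ch ω * g ω)]
      have e1 : μ[(fun ω => ch ω * g ω)|m] =ᵐ[μ] fun ω => ch ω * (μ[g|m]) ω :=
        condExp_mul_of_stronglyMeasurable_left hch_meas hchg_int (g2.integrable one_le_two)
      have e2 : μ[(fun ω => ch ω * g ω)|m] =ᵐ[μ] 0 := by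
        filter_upwards [e1, gcond] with ω h1 h2
        simp only [Pi.zero_apply] at h2 ⊢
        rw [h1, h2, mul_zero]
      rw [integral_congr_ae e2]
      simp
    calc ∫ ω, (h ω - projCandidate μ m X h ω) * g ω ∂μ
        = ∫ ω, (b ω * (X ω * g ω) + ch ω * g ω) ∂μ :=
          integral_congr_ae (Filter.Eventually.of_forall fun ω => by
            simp only [projCandidate, hb_def, hc_def, hV_def, hch_def]; ring)
      _ = (∫ ω, b ω * (X ω * g ω) ∂μ) + ∫ ω, ch ω * g ω ∂μ :=
          integral_add hbg_int hchg_int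
      _ = 0 := by rw [key1, key2, add_zero]
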